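/- Let N′ be the endomorphism of ℂ⁴ with N′(u₃) = u₁ and N′(u_j) = 0 for j ≠ 3, and N the endomorphism with N(e₃) = e₁, N(e_j) = 0 for j ≠ 3, where u₁ = (e₁ + i e₃)/√2, u₃ = (e₁ − i e₃)/√2, u₂ = (e₂ + i e₄)/√2, u₄ = (e₂ − i e₄)/√2. Let F₀ be the flag with F₀³ = span(u₂) and F₀² = span(u₂, u₃). Then for all real x ≠ −2: exp(i x N)·F₀ = exp((x/(2+x))·N′)·F₀, i.e., the filtrations obtained by applying these two invertible linear maps to F₀ coincide. -/

import Mathlib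

open Matrix NormedSpace

lemma exp_sq_zero {A : Matrix (Fin 4) (Fin 4) ℂ} (h : A * A = 0) :
    exp A = 1 + A := by
  have hpow : ∀ n, 2 ≤ n → A ^ n = 0 := by
    intro n hn
    obtain ⟨m, rfl⟩ := Nat.exists_eq_add_of_le hn
    rw [pow_add, pow_two, h, zero_mul]
  rw [exp_eq_tsum (𝕂 := ℂ)]
  have hz : ∀ n ∉ ({0, 1} : Finset ℕ), (((n.factorial : ℂ))⁻¹) • A ^ n = 0 := by
    intro n hn
    simp only [Finset.mem_insert, Finset.mem_singleton] at hn
    rw [hpow n (by omega), smul_zero]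
  rw [show (fun x : Matrix (Fin 4) (Fin 4) ℂ => ∑' n : ℕ, ((n.factorial : ℂ))⁻¹ • x ^ n) A = ∑' n : ℕ, ((n.factorial : ℂ))⁻¹ • A ^ n from rfl, tsum_eq_sum hz]
  simp [Finset.sum_pair]

lemma eq_zero_of_cols (M : Matrix (Fin 4) (Fin 4) ℂ)
    (h : ∀ j, M *ᵥ Pi.single j 1 = 0) : M = 0 := by
  ext i j
  have := congrFun (h j) i
  simpa using this

theorem exp_ixN_F0_eq_exp_N'_F0
    (u : Fin 4 → (Fin 4 → ℂ))
    (hu0 : u 0 = (Real.sqrt 2 : ℂ)⁻¹ • ![1, 0, Complex.I, 0])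
    (hu1 : u 1 = (Real.sqrt 2 : ℂ)⁻¹ • ![0, 1, 0, Complex.I])
    (hu2 : u 2 = (Real.sqrt 2 : ℂ)⁻¹ • ![1, 0, -Complex.I, 0])
    (hu3 : u 3 = (Real.sqrt 2 : ℂ)⁻¹ • ![0, 1, 0, -Complex.I])
    (N : Matrix (Fin 4) (Fin 4) ℂ)
    (hN3 : N.mulVec (Pi.single 2 1) = Pi.single 0 1)
    (hNj : ∀ j : Fin 4, j ≠ 2 → N.mulVec (Pi.single j 1) = 0)
    (N' : Matrix (Fin 4) (Fin 4) ℂ)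
    (hN'3 : N'.mulVec (u 2) = u 0)
    (hN'j : ∀ j : Fin 4, j ≠ 2 → N'.mulVec (u j) = 0)
    (F3 F2 : Submodule ℂ (Fin 4 → ℂ))
    (hF3 : F3 = Submodule.span ℂ {u 1})
    (hF2 : F2 = Submodule.span ℂ {u 1, u 2}) :
    ∀ x : ℝ, x ≠ -2 →
      F3.map (exp ((Complex.I * x) • N)).mulVecLin =
        F3.map (exp (((x / (2 + x) : ℝ) : ℂ) • N')).mulVecLin ∧
      F2.map (exp ((Complex.I * x) • N)).mulVecLin =
        F2.map (exp (((x / (2 + x) : ℝ) : ℂ) • N')).mulVecLin := by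
  intro x hx
  set s : ℂ := (Real.sqrt 2 : ℂ) with hs
  have hs2 : s * s = 2 := by
    rw [hs]
    norm_cast
    exact Real.mul_self_sqrt (by norm_num)
  have hs0 : s ≠ 0 := by
    rw [hs]
    exact_mod_cast Complex.ofReal_ne_zero.mpr
      (ne_of_gt (Real.sqrt_pos.mpr (by norm_num)))
  have hss : s⁻¹ * s⁻¹ = 2⁻¹ := by rw [← mul_inv, hs2]
  -- decompositions of the explicit vectors into standard basis vectors
  have hv0 : (![1, 0, Complex.I, 0] : Fin 4 → ℂ)
      = (Pi.single 0 1 : Fin 4 → ℂ) + Complex.I • (Pi.single 2 1 : Fin 4 → ℂ) := by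
    funext i; fin_cases i <;> simp [Pi.single_apply]
  have hv1 : (![0, 1, 0, Complex.I] : Fin 4 → ℂ)
      = (Pi.single 1 1 : Fin 4 → ℂ) + Complex.I • (Pi.single 3 1 : Fin 4 → ℂ) := by
    funext i; fin_cases i <;> simp [Pi.single_apply]
  have hv2 : (![1, 0, -Complex.I, 0] : Fin 4 → ℂ)
      = (Pi.single 0 1 : Fin 4 → ℂ) + (-Complex.I) • (Pi.single 2 1 : Fin 4 → ℂ) := by
    funext i; fin_cases i <;> simp [Pi.single_apply]
  have hv3 : (![0, 1, 0, -Complex.I] : Fin 4 → ℂ)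
      = (Pi.single 1 1 : Fin 4 → ℂ) + (-Complex.I) • (Pi.single 3 1 : Fin 4 → ℂ) := by
    funext i; fin_cases i <;> simp [Pi.single_apply]
  -- N on u 1, u 2
  have hNu1 : N *ᵥ u 1 = 0 := by
    rw [hu1, mulVec_smul, hv1, mulVec_add, mulVec_smul,
      hNj 1 (by decide), hNj 3 (by decide)]
    simp
  have hNu2 : N *ᵥ u 2 = (-Complex.I * s⁻¹) • (Pi.single 0 1 : Fin 4 → ℂ) := by
    rw [hu2, mulVec_smul, hv2, mulVec_add, mulVec_smul,
      hNj 0 (by decide), hN3, zero_add, smul_smul, mul_comm]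
  -- standard basis vectors in terms of u
  have hsingle0 : (Pi.single 0 1 : Fin 4 → ℂ) = s⁻¹ • (u 0 + u 2) := by
    rw [hu0, hu2, ← smul_add, smul_smul, hss]
    funext i
    fin_cases i <;> simp [Pi.single_apply] <;> norm_num
  have hsingle1 : (Pi.single 1 1 : Fin 4 → ℂ) = s⁻¹ • (u 1 + u 3) := by
    rw [hu1, hu3, ← smul_add, smul_smul, hss]
    funext i
    fin_cases i <;> simp [Pi.single_apply] <;> norm_num
  have hsingle2 : (Pi.single 2 1 : Fin 4 → ℂ) = (-Complex.I * s⁻¹) • (u 0 - u 2) := by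
    rw [hu0, hu2, ← smul_sub, smul_smul, mul_assoc, hss]
    funext i
    fin_cases i <;> simp [Pi.single_apply] <;> ring_nf <;> simp [Complex.I_sq]
  have hsingle3 : (Pi.single 3 1 : Fin 4 → ℂ) = (-Complex.I * s⁻¹) • (u 1 - u 3) := by
    rw [hu1, hu3, ← smul_sub, smul_smul, mul_assoc, hss]
    funext i
    fin_cases i <;> simp [Pi.single_apply] <;> ring_nf <;> simp [Complex.I_sq]
  -- N' on standard basis vectors
  have hN'e0 : N' *ᵥ (Pi.single 0 1 : Fin 4 → ℂ) = s⁻¹ • u 0 := by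
    rw [hsingle0, mulVec_smul, mulVec_add, hN'j 0 (by decide), hN'3, zero_add]
  have hN'e1 : N' *ᵥ (Pi.single 1 1 : Fin 4 → ℂ) = 0 := by
    rw [hsingle1, mulVec_smul, mulVec_add, hN'j 1 (by decide), hN'j 3 (by decide),
      zero_add, smul_zero]
  have hN'e2 : N' *ᵥ (Pi.single 2 1 : Fin 4 → ℂ) = (Complex.I * s⁻¹) • u 0 := by
    rw [hsingle2, mulVec_smul, mulVec_sub, hN'j 0 (by decide), hN'3, zero_sub]
    module
  have hN'e3 : N' *ᵥ (Pi.single 3 1 : Fin 4 → ℂ) = 0 := by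
    rw [hsingle3, mulVec_smul, mulVec_sub, hN'j 1 (by decide), hN'j 3 (by decide),
      sub_zero, smul_zero]
  -- squares vanish
  have hNsq : N * N = 0 := by
    apply eq_zero_of_cols
    intro j
    rw [← mulVec_mulVec]
    by_cases hj : j = 2
    · subst hj
      rw [hN3, hNj 0 (by decide)]
    · rw [hNj j hj, mulVec_zero]
  have hN'sq : N' * N' = 0 := by
    apply eq_zero_of_cols
    intro j
    rw [← mulVec_mulVec]
    match j with
    | 0 => rw [hN'e0, mulVec_smul, hN'j 0 (by decide), smul_zero]
    | 1 => rw [hN'e1, mulVec_zero]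
    | 2 => rw [hN'e2, mulVec_smul, hN'j 0 (by decide), smul_zero]
    | 3 => rw [hN'e3, mulVec_zero]
  set c : ℂ := ((x / (2 + x) : ℝ) : ℂ) with hc
  have hexpA : exp ((Complex.I * x) • N) = 1 + (Complex.I * x) • N := by
    apply exp_sq_zero
    rw [Matrix.smul_mul, Matrix.mul_smul, hNsq, smul_zero, smul_zero]
  have hexpB : exp (c • N') = 1 + c • N' := by
    apply exp_sq_zero
    rw [Matrix.smul_mul, Matrix.mul_smul, hN'sq, smul_zero, smul_zero]
  have hx' : ((2 : ℂ) + x) ≠ 0 := by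
    intro h
    apply hx
    have : ((2 : ℝ) + x : ℝ) = 0 := by exact_mod_cast h
    linarith
  have hcval : c = (x : ℂ) / (2 + x) := by rw [hc]; push_cast; ring
  -- action on u 1 and u 2
  have hAu1 : (1 + (Complex.I * (x : ℂ)) • N) *ᵥ u 1 = u 1 := by
    rw [add_mulVec, one_mulVec, smul_mulVec, hNu1, smul_zero, add_zero]
  have hBu1 : (1 + c • N') *ᵥ u 1 = u 1 := by
    rw [add_mulVec, one_mulVec, smul_mulVec, hN'j 1 (by decide), smul_zero, add_zero]
  have hBu2 : (1 + c • N') *ᵥ u 2 = u 2 + c • u 0 := by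
    rw [add_mulVec, one_mulVec, smul_mulVec, hN'3]
  have hAu2 : (1 + (Complex.I * (x : ℂ)) • N) *ᵥ u 2
      = (((2 : ℂ) + x) / 2) • ((1 + c • N') *ᵥ u 2) := by
    rw [add_mulVec, one_mulVec, smul_mulVec, hNu2, hBu2, hsingle0, hcval]
    match_scalars
    · field_simp
      linear_combination (-(x:ℂ)) * hs2 + (-(2*(x:ℂ))) * Complex.I_sq
    · field_simp
      linear_combination (-(x:ℂ)) * hs2 + (-(2*(x:ℂ))) * Complex.I_sq
  have hk0 : (((2 : ℂ) + x) / 2) ≠ 0 := div_ne_zero hx' two_ne_zero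
  constructor
  · rw [hF3, hexpA, hexpB, Submodule.map_span, Submodule.map_span,
      Set.image_singleton, Set.image_singleton]
    simp only [mulVecLin_apply, hAu1, hBu1]
  · rw [hF2, hexpA, hexpB, Submodule.map_span, Submodule.map_span,
      Set.image_insert_eq, Set.image_singleton, Set.image_insert_eq, Set.image_singleton]
    simp only [mulVecLin_apply, hAu1, hBu1, hAu2]
    rw [Submodule.span_insert, Submodule.span_insert,
      Submodule.span_singleton_smul_eq (isUnit_iff_ne_zero.mpr hk0)]
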